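/- arXiv:0903.4611 — 6 statements merged into one kernel-verified Lean document; each statement's English description precedes it below -/
import Mathlib

section
/- If (x, y) is a rational point on the curve y² = x³ − n²x with y ≠ 0, then a = |y/x|, b = 2n|x/y|, c = (x² + n²)/|y| satisfy a² + b² = c² and ab/2 = n. -/
theorem stmt_2 (n : ℕ) (hn : 0 < n) (x y : ℚ) (hy : y ≠ 0)
    (hxy : y ^ 2 = x ^ 3 - n ^ 2 * x) :
    |y / x| ^ 2 + (2 * n * |x / y|) ^ 2 = ((x ^ 2 + n ^ 2) / |y|) ^ 2 ∧
      |y / x| * (2 * n * |x / y|) / 2 = n := by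
  have hx : x ≠ 0 := by
    intro h
    apply hy
    rw [h] at hxy
    simpa [pow_eq_zero_iff] using hxy
  constructor
  · have h1 : |y / x| ^ 2 = (y / x) ^ 2 := sq_abs _
    have h2 : |x / y| ^ 2 = (x / y) ^ 2 := sq_abs _
    have h3 : |y| ^ 2 = y ^ 2 := sq_abs _
    rw [div_pow, h3, h1, mul_pow, mul_pow, h2]
    field_simp
    linear_combination (y^2 + x^3 - (n:ℚ)^2*x) * hxy
  · have : |y / x| * |x / y| = 1 := by
      rw [← abs_mul]
      field_simp
      exact abs_one
    calc |y / x| * (2 * ↑n * |x / y|) / 2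
        = ↑n * (|y / x| * |x / y|) := by ring
      _ = ↑n := by rw [this, mul_one]
end

section
/- For any λ in a field with 1 + 2λ ≠ 0, the point (x, y) with x = (1 − 12λ + 4λ²)²/(4(1 + 2λ)²) and y = (1 − 12λ + 4λ²)(1 + 40λ − 104λ² + 160λ³ + 16λ⁴)/(8(1 + 2λ)³) satisfies y² = x³ + dx, where d = 8λ(2λ − 1)². -/
theorem stmt_8 {K : Type*} [Field K] [CharZero K] (l : K) (hl : 1 + 2 * l ≠ 0) :
    letI x : K := (1 - 12 * l + 4 * l ^ 2) ^ 2 / (4 * (1 + 2 * l) ^ 2)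
    letI y : K := (1 - 12 * l + 4 * l ^ 2) *
      (1 + 40 * l - 104 * l ^ 2 + 160 * l ^ 3 + 16 * l ^ 4) / (8 * (1 + 2 * l) ^ 3)
    y ^ 2 = x ^ 3 + (8 * l * (2 * l - 1) ^ 2) * x := by
  have h2 : (2 : K) ≠ 0 := two_ne_zero
  field_simp
  ring
end

section
/- Let n be a positive integer with n ≠ 4, and let λ be the unique real root of 32λ³ − 32λ² + 8λ + n² = 0. Define x = (1/(4(n² − 16)²))·(256 + 992n² + 65n⁴ + (1024 − 2688n² − 28n⁴)λ + (1024 + 1920n² + 4n⁴)λ²) and y = (1/(32(n² − 16)³))·(−16384 + 72704n² + 80960n⁴ + 2868n⁶ − n⁸ + (196608 − 462848n² − 145152n⁴ − 1456n⁶)λ + (196608 + 421888n² + 100608n⁴ + 208n⁶)λ²). Then y² = x³ − n²x. -/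
set_option maxHeartbeats 2000000

theorem stmt_12 (n : ℕ) (hn : 0 < n) (hn4 : n ≠ 4) (l : ℝ)
    (hl : 32 * l ^ 3 - 32 * l ^ 2 + 8 * l + (n : ℝ) ^ 2 = 0) :
    letI x : ℝ := (1 / (4 * ((n : ℝ) ^ 2 - 16) ^ 2)) *
      (256 + 992 * (n : ℝ) ^ 2 + 65 * (n : ℝ) ^ 4 +
        (1024 - 2688 * (n : ℝ) ^ 2 - 28 * (n : ℝ) ^ 4) * l +
        (1024 + 1920 * (n : ℝ) ^ 2 + 4 * (n : ℝ) ^ 4) * l ^ 2)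
    letI y : ℝ := (1 / (32 * ((n : ℝ) ^ 2 - 16) ^ 3)) *
      (-16384 + 72704 * (n : ℝ) ^ 2 + 80960 * (n : ℝ) ^ 4 + 2868 * (n : ℝ) ^ 6 -
        (n : ℝ) ^ 8 +
        (196608 - 462848 * (n : ℝ) ^ 2 - 145152 * (n : ℝ) ^ 4 - 1456 * (n : ℝ) ^ 6) * l +
        (196608 + 421888 * (n : ℝ) ^ 2 + 100608 * (n : ℝ) ^ 4 + 208 * (n : ℝ) ^ 6) * l ^ 2)
    y ^ 2 = x ^ 3 - (n : ℝ) ^ 2 * x := by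
  have h4 : (n : ℝ) ≠ 4 := by exact_mod_cast hn4
  have hD : ((n : ℝ) ^ 2 - 16) ≠ 0 := by
    intro h
    apply h4
    nlinarith [Nat.cast_nonneg (α := ℝ) n]

  field_simp
  linear_combination ((-77309411328) * l^0 * (n:ℝ)^0 + (377957122048) * l^0 * (n:ℝ)^2 + (-543682461696) * l^0 * (n:ℝ)^4 + (253608591360) * l^0 * (n:ℝ)^6 + (17435852800) * l^0 * (n:ℝ)^8 + (182943744) * l^0 * (n:ℝ)^10 + (697856) * l^0 * (n:ℝ)^12 + (64) * l^0 * (n:ℝ)^14 + (-180388626432) * l^1 * (n:ℝ)^0 + (222264557568) * l^1 * (n:ℝ)^2 + (655150284800) * l^1 * (n:ℝ)^4 + (-749262077952) * l^1 * (n:ℝ)^6 + (-21667119104) * l^1 * (n:ℝ)^8 + (-172769280) * l^1 * (n:ℝ)^10 + (-272896) * l^1 * (n:ℝ)^12 + (-137438953472) * l^2 * (n:ℝ)^0 + (-309237645312) * l^2 * (n:ℝ)^2 + (291520905216) * l^2 * (n:ℝ)^4 + (734439407616) * l^2 * (n:ℝ)^6 + (12475957248) * l^2 * (n:ℝ)^8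 + (42467328) * l^2 * (n:ℝ)^10 + (40960) * l^2 * (n:ℝ)^12 + (-34359738368) * l^3 * (n:ℝ)^0 + (-193273528320) * l^3 * (n:ℝ)^2 + (-362790518784) * l^3 * (n:ℝ)^4 + (-228002365440) * l^3 * (n:ℝ)^6 + (-1417150464) * l^3 * (n:ℝ)^8 + (-2949120) * l^3 * (n:ℝ)^10 + (-2048) * l^3 * (n:ℝ)^12) * hl
end

section
/- The points (1 + √2, √2 + 2) and (1 − √2, √2 − 2) lie on the elliptic curve Y² = X³ − X and are torsion points of its Mordell–Weil group over ℚ(√2). -/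
open WeierstrassCurve

lemma some_eq {F : Type*} [Field F] {W : Affine F} {x₁ y₁ x₂ y₂ : F}
    (h₁ : W.Nonsingular x₁ y₁) (hx : x₁ = x₂) (hy : y₁ = y₂)
    (h₂ : W.Nonsingular x₂ y₂) :
    Affine.Point.some _ _ h₁ = Affine.Point.some _ _ h₂ := by subst hx; subst hy; rfl

open WeierstrassCurve in
theorem stmt_16 :
    letI W : Affine ℝ := { a₁ := 0, a₂ := 0, a₃ := 0, a₄ := -1, a₆ := 0 }
    ∃ (h₁ : W.Nonsingular (1 + Real.sqrt 2) (Real.sqrt 2 + 2))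
      (h₂ : W.Nonsingular (1 - Real.sqrt 2) (Real.sqrt 2 - 2)),
      (1 + Real.sqrt 2 ∈ Algebra.adjoin ℚ {Real.sqrt 2}) ∧
      (Real.sqrt 2 + 2 ∈ Algebra.adjoin ℚ {Real.sqrt 2}) ∧
      (1 - Real.sqrt 2 ∈ Algebra.adjoin ℚ {Real.sqrt 2}) ∧
      (Real.sqrt 2 - 2 ∈ Algebra.adjoin ℚ {Real.sqrt 2}) ∧
      (∃ k : ℕ, k ≠ 0 ∧ k • (Affine.Point.some _ _ h₁) = (0 : W.Point)) ∧
      (∃ k : ℕ, k ≠ 0 ∧ k • (Affine.Point.some _ _ h₂) = (0 : W.Point)) := by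
  set W : Affine ℝ := { a₁ := 0, a₂ := 0, a₃ := 0, a₄ := -1, a₆ := 0 } with hW
  have hs : Real.sqrt 2 ^ 2 = 2 := Real.sq_sqrt (by norm_num)
  have hspos : (0:ℝ) < Real.sqrt 2 := Real.sqrt_pos.mpr (by norm_num)
  have hmem : Real.sqrt 2 ∈ Algebra.adjoin ℚ {Real.sqrt 2} :=
    Algebra.subset_adjoin rfl
  have h1 : (1:ℝ) ∈ Algebra.adjoin ℚ {Real.sqrt 2} := one_mem _
  have h2 : (2:ℝ) ∈ Algebra.adjoin ℚ {Real.sqrt 2} := by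
    exact ofNat_mem _ 2
  have h₁ : W.Nonsingular (1 + Real.sqrt 2) (Real.sqrt 2 + 2) := by
    rw [Affine.nonsingular_iff, Affine.equation_iff]
    simp only [hW]
    constructor
    · nlinarith [hs]
    · right; intro h; nlinarith [hs, hspos]
  have h₂ : W.Nonsingular (1 - Real.sqrt 2) (Real.sqrt 2 - 2) := by
    rw [Affine.nonsingular_iff, Affine.equation_iff]
    simp only [hW]
    constructor
    · nlinarith [hs]
    · right; intro h; nlinarith [hs, hspos]
  refine ⟨h₁, h₂, add_mem h1 hmem, add_mem hmem h2,
    sub_mem h1 hmem, sub_mem hmem h2, ?_, ?_⟩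
  · -- P has order 4
    have hT : W.Nonsingular 1 0 := by
      rw [Affine.nonsingular_iff, Affine.equation_iff]
      simp only [hW]; norm_num
    have hy : Real.sqrt 2 + 2 ≠ W.negY (1 + Real.sqrt 2) (Real.sqrt 2 + 2) := by
      simp only [Affine.negY, hW]; intro h; nlinarith [hs, hspos]
    have hL : W.slope (1 + Real.sqrt 2) (1 + Real.sqrt 2) (Real.sqrt 2 + 2) (Real.sqrt 2 + 2)
        = 1 + Real.sqrt 2 := by
      rw [Affine.slope_of_Y_ne rfl hy]
      simp only [Affine.negY, hW]
      rw [div_eq_iff (by intro h; nlinarith [hs, hspos])]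
      nlinarith [hs]
    have hdbl : Affine.Point.some _ _ h₁ + Affine.Point.some _ _ h₁ = Affine.Point.some _ _ hT := by
      rw [Affine.Point.add_self_of_Y_ne hy]
      refine some_eq _ ?_ ?_ hT <;> rw [hL] <;>
        simp only [Affine.addX, Affine.addY, Affine.negAddY, Affine.negY, hL, hW] <;>
        nlinarith [hs]
    refine ⟨4, by norm_num, ?_⟩
    have h4 : (4 : ℕ) • Affine.Point.some _ _ h₁ =
        (Affine.Point.some _ _ h₁ + Affine.Point.some _ _ h₁) +
          (Affine.Point.some _ _ h₁ + Affine.Point.some _ _ h₁) := by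
      rw [show (4 : ℕ) = 2 + 2 by norm_num, add_nsmul, two_nsmul]
    rw [h4, hdbl]
    exact Affine.Point.add_self_of_Y_eq (by simp only [Affine.negY, hW]; ring)
  · have hT : W.Nonsingular 1 0 := by
      rw [Affine.nonsingular_iff, Affine.equation_iff]
      simp only [hW]; norm_num
    have hy : Real.sqrt 2 - 2 ≠ W.negY (1 - Real.sqrt 2) (Real.sqrt 2 - 2) := by
      simp only [Affine.negY, hW]; intro h; nlinarith [hs, hspos]
    have hL : W.slope (1 - Real.sqrt 2) (1 - Real.sqrt 2) (Real.sqrt 2 - 2) (Real.sqrt 2 - 2)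
        = Real.sqrt 2 - 1 := by
      rw [Affine.slope_of_Y_ne rfl hy]
      simp only [Affine.negY, hW]
      rw [div_eq_iff (by intro h; nlinarith [hs, hspos])]
      nlinarith [hs]
    have hdbl : Affine.Point.some _ _ h₂ + Affine.Point.some _ _ h₂ = Affine.Point.some _ _ hT := by
      rw [Affine.Point.add_self_of_Y_ne hy]
      refine some_eq _ ?_ ?_ hT <;> rw [hL] <;>
        simp only [Affine.addX, Affine.addY, Affine.negAddY, Affine.negY, hL, hW] <;>
        nlinarith [hs]
    refine ⟨4, by norm_num, ?_⟩
    have h4 : (4 : ℕ) • Affine.Point.some _ _ h₂ =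
        (Affine.Point.some _ _ h₂ + Affine.Point.some _ _ h₂) +
          (Affine.Point.some _ _ h₂ + Affine.Point.some _ _ h₂) := by
      rw [show (4 : ℕ) = 2 + 2 by norm_num, add_nsmul, two_nsmul]
    rw [h4, hdbl]
    exact Affine.Point.add_self_of_Y_eq (by simp only [Affine.negY, hW]; ring)
end

section
/- The equation 11y² = x⁴ + 4 has no solution in rational numbers x, y. -/
lemma zmod11_key : ∀ A B : ZMod 11, A ^ 4 + 4 * B ^ 4 = 0 → A = 0 ∧ B = 0 := by decide

theorem stmt_18 : ¬ ∃ x y : ℚ, 11 * y ^ 2 = x ^ 4 + 4 := by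
  rintro ⟨x, y, h⟩
  set a : ℤ := x.num with ha
  set b : ℤ := (x.den : ℤ) with hbdef
  have hb0 : ((b : ℤ) : ℚ) ≠ 0 := by
    rw [hbdef]; exact_mod_cast Nat.cast_ne_zero.mpr x.den_nz
  set z : ℚ := y * ((x.den : ℚ)) ^ 2 with hzdef
  have hx : (x : ℚ) = (a : ℚ) / (b : ℚ) := (Rat.num_div_den x).symm
  have hz : 11 * z ^ 2 = ((a ^ 4 + 4 * b ^ 4 : ℤ) : ℚ) := by
    rw [hzdef]
    push_cast
    rw [hx] at h
    field_simp at h ⊢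
    linear_combination h
  set u : ℤ := z.num with hu
  set v : ℤ := (z.den : ℤ) with hv
  have hv0 : ((v : ℤ) : ℚ) ≠ 0 := by
    rw [hv]; exact_mod_cast Nat.cast_ne_zero.mpr z.den_nz
  have hzq : (z : ℚ) = (u : ℚ) / (v : ℚ) := (Rat.num_div_den z).symm
  have hint : (11 : ℤ) * u ^ 2 = (a ^ 4 + 4 * b ^ 4) * v ^ 2 := by
    have : ((11 * u ^ 2 : ℤ) : ℚ) = (((a ^ 4 + 4 * b ^ 4) * v ^ 2 : ℤ) : ℚ) := by
      push_cast
      rw [hzq] at hz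
      field_simp at hz
      push_cast at hz
      linear_combination hz
    exact_mod_cast this
  have hp : Prime (11 : ℤ) := by norm_num
  by_cases hdv : (11 : ℤ) ∣ v
  · -- then 11 ∣ u too, contradicting coprimality of z
    obtain ⟨w, hw⟩ := hdv
    have hsq : (11 : ℤ) ∣ u ^ 2 := by
      refine ⟨(a ^ 4 + 4 * b ^ 4) * w ^ 2, ?_⟩
      have h2 : (11 : ℤ) * u ^ 2 = 11 * (11 * ((a ^ 4 + 4 * b ^ 4) * w ^ 2)) := by
        rw [hint, hw]; ring
      exact mul_left_cancel₀ (by norm_num : (11:ℤ) ≠ 0) h2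
    have hdu : (11 : ℤ) ∣ u := hp.dvd_of_dvd_pow hsq
    have hcop := z.reduced
    have h1 : (11 : ℕ) ∣ z.num.natAbs := by
      have := Int.natAbs_dvd_natAbs.mpr hdu
      simpa using this
    have h2 : (11 : ℕ) ∣ z.den := by
      have hdv' : (11 : ℤ) ∣ ((z.den : ℤ)) := hv ▸ ⟨w, hw⟩
      exact_mod_cast hdv'
    have := Nat.eq_one_of_dvd_coprimes hcop h1 h2
    norm_num at this
  · haveI : Fact (Nat.Prime 11) := ⟨by norm_num⟩
    -- 11 ∤ v, so mod 11 we get a^4 + 4 b^4 ≡ 0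
    have hc : ((11 * u ^ 2 : ℤ) : ZMod 11) = (((a ^ 4 + 4 * b ^ 4) * v ^ 2 : ℤ) : ZMod 11) :=
      congrArg (Int.cast : ℤ → ZMod 11) hint
    push_cast at hc
    have h11 : (11 : ZMod 11) = 0 := by rfl
    rw [h11, zero_mul] at hc
    have hvz : ((v : ZMod 11)) ≠ 0 := by
      rw [Ne, ZMod.intCast_zmod_eq_zero_iff_dvd]
      exact_mod_cast hdv
    have hmod : ((a : ZMod 11)) ^ 4 + 4 * ((b : ZMod 11)) ^ 4 = 0 := by
      rcases mul_eq_zero.mp hc.symm with h' | h'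
      · exact h'
      · exact absurd (pow_eq_zero_iff (by norm_num)|>.mp h') hvz
    obtain ⟨hA, hB⟩ := zmod11_key _ _ hmod
    have hda : (11 : ℤ) ∣ a := by
      rwa [ZMod.intCast_zmod_eq_zero_iff_dvd] at hA
    have hdb : (11 : ℤ) ∣ b := by
      rwa [ZMod.intCast_zmod_eq_zero_iff_dvd] at hB
    have hcop := x.reduced
    have h1 : (11 : ℕ) ∣ x.num.natAbs := by
      have := Int.natAbs_dvd_natAbs.mpr hda
      simpa using this
    have h2 : (11 : ℕ) ∣ x.den := by
      rw [hbdef] at hdb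
      exact_mod_cast hdb
    have := Nat.eq_one_of_dvd_coprimes hcop h1 h2
    norm_num at this
end

section
/- If n is a congruent number (i.e., there exist nonzero rationals a, b, c with a² + b² = c² and ab/2 = n), then n is not a perfect square. -/
private lemma zmod4_aux : ∀ a b c : ZMod 4, (a + a) ^ 4 ≠ (2 * b + 1) ^ 4 + c ^ 2 := by
  decide

private lemma sq_pos_int {a : ℤ} (h : a ≠ 0) : 0 < a ^ 2 :=
  lt_of_le_of_ne (sq_nonneg a) (Ne.symm (pow_ne_zero 2 h))

private lemma natAbs_lt_of_abs_lt {a b : ℤ} (h : |a| < |b|) : a.natAbs < b.natAbs := by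
  rw [Int.abs_eq_natAbs, Int.abs_eq_natAbs] at h
  exact_mod_cast h

private lemma natAbs_lt_of_sq_lt {a b : ℤ} (h : a ^ 2 < b ^ 2) : a.natAbs < b.natAbs := by
  apply natAbs_lt_of_abs_lt
  nlinarith [abs_nonneg a, abs_nonneg b, sq_abs a, sq_abs b]

set_option maxHeartbeats 2000000 in
/-- Fermat's right triangle theorem, descent form: no solution to x⁴ = y⁴ + z²
with everything nonzero (positivity form, by strong induction on |x|). -/
private theorem no_f44_pos : ∀ N : ℕ, ∀ x y z : ℤ, x.natAbs ≤ N → 0 < x → 0 < y → z ≠ 0 →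
    x ^ 4 ≠ y ^ 4 + z ^ 2 := by
  intro N
  induction N using Nat.strong_induction_on with
  | _ N IH =>
  intro x y z hxn hx hy hz heq
  have hx0 : x ≠ 0 := hx.ne'
  have hy0 : y ≠ 0 := hy.ne'
  -- generic descent step
  have descend : ∀ x' y' z' : ℤ, x'.natAbs < x.natAbs → x' ≠ 0 → y' ≠ 0 → z' ≠ 0 →
      x' ^ 4 = y' ^ 4 + z' ^ 2 → False := by
    intro x' y' z' h1 h2 h3 h4 h5
    have e1 : |x'| ^ 4 = x' ^ 4 := by rw [pow_abs, abs_of_nonneg (by positivity)]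
    have e2 : |y'| ^ 4 = y' ^ 4 := by rw [pow_abs, abs_of_nonneg (by positivity)]
    refine IH x'.natAbs (lt_of_lt_of_le h1 hxn) |x'| |y'| z' ?_ (abs_pos.mpr h2)
      (abs_pos.mpr h3) h4 ?_
    · exact le_of_eq (Int.natAbs_abs x')
    · rw [e1, e2]; exact h5
  by_cases hg : Int.gcd x y = 1
  · -- coprime case
    have hco : IsCoprime x y := Int.isCoprime_iff_gcd_eq_one.mpr hg
    -- x is odd
    have hxodd : Odd x := by
      rcases Int.even_or_odd x with hxe | hxo
      · exfalso
        have hyodd : Odd y := by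
          rcases Int.even_or_odd y with hye | hyo
          · exfalso
            have : IsUnit (2 : ℤ) := hco.isUnit_of_dvd' hxe.two_dvd hye.two_dvd
            rw [Int.isUnit_iff] at this
            omega
          · exact hyo
        obtain ⟨a, ha⟩ := hxe
        obtain ⟨b, hb⟩ := hyodd
        refine zmod4_aux (a : ZMod 4) (b : ZMod 4) (z : ZMod 4) ?_
        have h4 := congrArg (fun t : ℤ => (t : ZMod 4)) heq
        rw [ha, hb] at h4
        push_cast at h4
        exact h4
      · exact hxo
    have hx2pos : 0 < x ^ 2 := sq_pos_int hx0
    -- coprimality of z and y^2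
    have hcozy : IsCoprime z y := by
      have h1 : IsCoprime (y ^ 4) (x ^ 4) := (hco.symm.pow)
      have h2 : IsCoprime (y ^ 4) (x ^ 4 + y ^ 4 * (-1)) := h1.add_mul_left_right (-1)
      have h3 : IsCoprime (y ^ 4) (z ^ 2) := by
        convert h2 using 2; linarith [heq]
      have h3' : IsCoprime ((y ^ 2) ^ 2) (z ^ 2) := by
        rw [show (4 : ℕ) = 2 * 2 by rfl, pow_mul] at h3
        exact h3
      have h4 : IsCoprime (y ^ 2) (z ^ 2) := (IsCoprime.pow_left_iff two_pos).mp h3'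
      have h5 : IsCoprime y z :=
        (IsCoprime.pow_left_iff two_pos).mp ((IsCoprime.pow_right_iff two_pos).mp h4)
      exact h5.symm
    rcases Int.even_or_odd y with hye | hyo
    · -- y even, z odd
      have hzodd : Odd z := by
        have hz2 : Odd (z ^ 2) := by
          have : z ^ 2 = x ^ 4 - y ^ 4 := by linarith
          rw [this]
          exact (hxodd.pow).sub_even (hye.pow_of_ne_zero (by norm_num))
        rcases Int.even_or_odd z with hze | hzo
        · exact absurd (hze.pow_of_ne_zero (by norm_num)) (fun h => (Int.not_odd_iff_even.mpr h) hz2)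
        · exact hzo
      have ht : PythagoreanTriple z (y ^ 2) (x ^ 2) := by
        show z * z + y ^ 2 * y ^ 2 = x ^ 2 * x ^ 2
        linear_combination -heq
      have hgcd : Int.gcd z (y ^ 2) = 1 :=
        Int.isCoprime_iff_gcd_eq_one.mp (hcozy.pow_right)
      obtain ⟨m, n, hzmn, hy2, hx2, hmn, hpar, hm0'⟩ :=
        ht.coprime_classification' hgcd (Int.odd_iff.mp hzodd) hx2pos
      have hmne0 : m ≠ 0 := by
        intro h
        apply hy0
        have : y ^ 2 = 0 := by rw [hy2, h]; ring
        exact pow_eq_zero_iff (by norm_num) |>.mp this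
      have hmpos : 0 < m := lt_of_le_of_ne hm0' (Ne.symm hmne0)
      have hmnpos : 0 < m * n := by
        have h2 := sq_pos_int hy0
        rw [hy2] at h2
        linarith
      have hnpos : 0 < n := by
        rcases mul_pos_iff.mp hmnpos with ⟨_, h⟩ | ⟨h, _⟩
        · exact h
        · linarith
      have hcomn : IsCoprime m n := Int.isCoprime_iff_gcd_eq_one.mpr hmn
      -- extract squares:  {m,n} = {2s², u²} with u odd
      obtain ⟨s, u, hs0, hu0, huodd, hx2', hco2⟩ :
          ∃ s u : ℤ, s ≠ 0 ∧ u ≠ 0 ∧ Odd u ∧ x ^ 2 = u ^ 4 + 4 * s ^ 4 ∧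
            IsCoprime (u ^ 2) (2 * s ^ 2) := by
        obtain ⟨w, hw⟩ := hye
        rcases hpar with ⟨hme, hno⟩ | ⟨hmo, hne⟩
        · -- m even : m = 2 m', n odd
          obtain ⟨m', hm'⟩ : (2 : ℤ) ∣ m := Int.dvd_of_emod_eq_zero hme
          have hwsq : m' * n = w ^ 2 := by
            have h4 : 4 * (m' * n) = 4 * w ^ 2 := by
              rw [hw, hm'] at hy2; linear_combination -hy2
            linarith
          have hcom' : IsCoprime m' n :=
            IsCoprime.of_isCoprime_of_dvd_left hcomn ⟨2, by linarith [hm']⟩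
          obtain ⟨s, hs⟩ := Int.sq_of_isCoprime hcom' hwsq
          obtain ⟨u, hu⟩ := Int.sq_of_isCoprime hcom'.symm (by linarith [hwsq] : n * m' = w ^ 2)
          have hm'pos : 0 < m' := by linarith
          have hs2 : m' = s ^ 2 := by
            rcases hs with h | h
            · exact h
            · exfalso; linarith [sq_nonneg s]
          have hu2 : n = u ^ 2 := by
            rcases hu with h | h
            · exact h
            · exfalso; linarith [sq_nonneg u]
          refine ⟨s, u, ?_, ?_, ?_, ?_, ?_⟩
          · intro h; rw [h] at hs2; norm_num at hs2; linarith
          · intro h; rw [h] at hu2; norm_num at hu2; linarith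
          · rcases Int.even_or_odd u with h | h
            · exfalso
              have : Even n := by rw [hu2]; exact h.pow_of_ne_zero (by norm_num)
              rw [Int.even_iff] at this; omega
            · exact h
          · rw [hx2, hm', hs2, hu2]; ring
          · rw [← hu2, show (2 * s ^ 2 : ℤ) = m by rw [hm', hs2]]
            exact hcomn.symm
        · -- n even : n = 2 n', m odd
          obtain ⟨n', hn'⟩ : (2 : ℤ) ∣ n := Int.dvd_of_emod_eq_zero hne
          have hwsq : n' * m = w ^ 2 := by
            have h4 : 4 * (n' * m) = 4 * w ^ 2 := by
              rw [hw, hn'] at hy2; linear_combination -hy2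
            linarith
          have hcon' : IsCoprime n' m :=
            IsCoprime.of_isCoprime_of_dvd_left hcomn.symm ⟨2, by linarith [hn']⟩
          obtain ⟨s, hs⟩ := Int.sq_of_isCoprime hcon' hwsq
          obtain ⟨u, hu⟩ := Int.sq_of_isCoprime hcon'.symm (by linarith [hwsq] : m * n' = w ^ 2)
          have hn'pos : 0 < n' := by linarith
          have hs2 : n' = s ^ 2 := by
            rcases hs with h | h
            · exact h
            · exfalso; linarith [sq_nonneg s]
          have hu2 : m = u ^ 2 := by
            rcases hu with h | h
            · exact h
            · exfalso; linarith [sq_nonneg u]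
          refine ⟨s, u, ?_, ?_, ?_, ?_, ?_⟩
          · intro h; rw [h] at hs2; norm_num at hs2; linarith
          · intro h; rw [h] at hu2; norm_num at hu2; linarith
          · rcases Int.even_or_odd u with h | h
            · exfalso
              have : Even m := by rw [hu2]; exact h.pow_of_ne_zero (by norm_num)
              rw [Int.even_iff] at this; omega
            · exact h
          · rw [hx2, hn', hs2, hu2]; ring
          · rw [← hu2, show (2 * s ^ 2 : ℤ) = n by rw [hn', hs2]]
            exact hcomn
      -- second Pythagorean triple (u², 2s², x)
      have ht2 : PythagoreanTriple (u ^ 2) (2 * s ^ 2) x := by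
        show u ^ 2 * u ^ 2 + 2 * s ^ 2 * (2 * s ^ 2) = x * x
        linear_combination -hx2'
      have hgcd2 : Int.gcd (u ^ 2) (2 * s ^ 2) = 1 :=
        Int.isCoprime_iff_gcd_eq_one.mp hco2
      have hu2odd : (u ^ 2) % 2 = 1 := Int.odd_iff.mp (huodd.pow)
      obtain ⟨M, K, hu2MK, hs2MK, hxMK, hMK, hparMK, hM0'⟩ :=
        ht2.coprime_classification' hgcd2 hu2odd hx
      have hsMK : s ^ 2 = M * K := by linarith [hs2MK]
      have hMne0 : M ≠ 0 := by
        intro h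
        apply hs0
        have : s ^ 2 = 0 := by rw [hsMK, h]; ring
        exact pow_eq_zero_iff (by norm_num) |>.mp this
      have hMpos : 0 < M := lt_of_le_of_ne hM0' (Ne.symm hMne0)
      have hKpos : 0 < K := by
        have : 0 < M * K := by rw [← hsMK]; exact sq_pos_int hs0
        rcases mul_pos_iff.mp this with ⟨_, h⟩ | ⟨h, _⟩
        · exact h
        · linarith
      have hcoMK : IsCoprime M K := Int.isCoprime_iff_gcd_eq_one.mpr hMK
      obtain ⟨e, he⟩ := Int.sq_of_isCoprime hcoMK hsMK.symm
      obtain ⟨f, hf⟩ := Int.sq_of_isCoprime hcoMK.symm (by linarith [hsMK] : K * M = s ^ 2)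
      have he2 : M = e ^ 2 := by
        rcases he with h | h
        · exact h
        · exfalso; linarith [sq_nonneg e]
      have hf2 : K = f ^ 2 := by
        rcases hf with h | h
        · exact h
        · exfalso; linarith [sq_nonneg f]
      have he0 : e ≠ 0 := by intro h; rw [h] at he2; norm_num at he2; linarith
      have hf0 : f ≠ 0 := by intro h; rw [h] at hf2; norm_num at hf2; linarith
      -- new solution e⁴ = f⁴ + u²
      have hnew : e ^ 4 = f ^ 4 + u ^ 2 := by
        have h : u ^ 2 = M ^ 2 - K ^ 2 := hu2MK
        rw [he2, hf2] at h
        linear_combination -h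
      -- size bound : |e| < |x|
      have hsize : e.natAbs < x.natAbs := by
        apply natAbs_lt_of_abs_lt
        have h1 : 1 ≤ |e| := Int.one_le_abs (by exact_mod_cast he0)
        have h2 : |e| ≤ e ^ 2 := by
          rw [← sq_abs e, sq]
          exact le_mul_of_one_le_left (abs_nonneg e) h1
        have h3 : e ^ 2 < x := by
          have h1M : (1 : ℤ) ≤ M := hMpos
          have hMM : M ≤ M ^ 2 := by
            rw [sq]
            exact le_mul_of_one_le_left hMpos.le h1M
          have hK2 : 0 < K ^ 2 := sq_pos_int hKpos.ne'
          rw [← he2, hxMK]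
          linarith
        rw [abs_of_pos hx]
        linarith
      exact descend e f u hsize he0 hf0 hu0 hnew
    · -- y odd : direct descent via triple (y², z, x²)
      have ht : PythagoreanTriple (y ^ 2) z (x ^ 2) := by
        show y ^ 2 * y ^ 2 + z * z = x ^ 2 * x ^ 2
        linear_combination -heq
      have hgcd : Int.gcd (y ^ 2) z = 1 :=
        Int.isCoprime_iff_gcd_eq_one.mp (hcozy.symm.pow_left)
      obtain ⟨m, n, hy2, hzmn, hx2, hmn, hpar, hm0'⟩ :=
        ht.coprime_classification' hgcd (Int.odd_iff.mp hyo.pow) hx2pos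
      have hmne0 : m ≠ 0 := by
        intro h
        have h2 := sq_pos_int hy0
        rw [hy2, h] at h2
        norm_num at h2
        linarith [sq_nonneg n]
      have hnne0 : n ≠ 0 := by
        intro h
        apply hz
        rw [hzmn, h]; ring
      have hnew : m ^ 4 = n ^ 4 + (x * y) ^ 2 := by
        have h1 : (x * y) ^ 2 = (m ^ 2 + n ^ 2) * (m ^ 2 - n ^ 2) := by
          rw [mul_pow, hx2, hy2]
        linear_combination -h1
      have hsize : m.natAbs < x.natAbs := by
        apply natAbs_lt_of_sq_lt
        rw [hx2]
        linarith [sq_pos_int hnne0]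
      exact descend m n (x * y) hsize hmne0 hnne0 (mul_ne_zero hx0 hy0) hnew
  · -- not coprime : divide by gcd
    set g : ℕ := Int.gcd x y with hgdef
    have hgne : g ≠ 0 := fun h => hx0 (Int.gcd_eq_zero_iff.mp h).1
    have hg2 : 2 ≤ g := by omega
    obtain ⟨x₁, hx1⟩ : (g : ℤ) ∣ x := Int.gcd_dvd_left x y
    obtain ⟨y₁, hy1⟩ : (g : ℤ) ∣ y := Int.gcd_dvd_right x y
    have hgz : (g : ℤ) ≠ 0 := by exact_mod_cast hgne
    have hz4 : ((g : ℤ) ^ 2) ^ 2 ∣ z ^ 2 := by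
      refine ⟨x₁ ^ 4 - y₁ ^ 4, ?_⟩
      rw [hx1, hy1] at heq
      linear_combination -heq
    obtain ⟨z₁, hz1⟩ : (g : ℤ) ^ 2 ∣ z := (Int.pow_dvd_pow_iff (by norm_num)).mp hz4
    have hx₁0 : x₁ ≠ 0 := by rintro rfl; simp at hx1; exact hx0 hx1
    have hy₁0 : y₁ ≠ 0 := by rintro rfl; simp at hy1; exact hy0 hy1
    have hz₁0 : z₁ ≠ 0 := by rintro rfl; simp at hz1; exact hz hz1
    have heq1 : x₁ ^ 4 = y₁ ^ 4 + z₁ ^ 2 := by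
      have h4 : (g : ℤ) ^ 4 * x₁ ^ 4 = (g : ℤ) ^ 4 * (y₁ ^ 4 + z₁ ^ 2) := by
        rw [hx1, hy1, hz1] at heq
        linear_combination heq
      exact mul_left_cancel₀ (pow_ne_zero 4 hgz) h4
    have hsize : x₁.natAbs < x.natAbs := by
      rw [hx1, Int.natAbs_mul, Int.natAbs_natCast]
      have h1 : 1 ≤ x₁.natAbs := Int.natAbs_pos.mpr hx₁0
      calc x₁.natAbs < 2 * x₁.natAbs := by omega
        _ ≤ g * x₁.natAbs := Nat.mul_le_mul_right _ hg2
    exact descend x₁ y₁ z₁ hsize hx₁0 hy₁0 hz₁0 heq1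

private theorem no_f44 (x y z : ℤ) (hx : x ≠ 0) (hy : y ≠ 0) (hz : z ≠ 0) :
    x ^ 4 ≠ y ^ 4 + z ^ 2 := by
  intro heq
  have e1 : |x| ^ 4 = x ^ 4 := by rw [pow_abs, abs_of_nonneg (by positivity)]
  have e2 : |y| ^ 4 = y ^ 4 := by rw [pow_abs, abs_of_nonneg (by positivity)]
  exact no_f44_pos x.natAbs |x| |y| z (le_of_eq (Int.natAbs_abs x)) (abs_pos.mpr hx) (abs_pos.mpr hy) hz
    (by rw [e1, e2]; exact heq)

private lemma no_rat_sq_two (q : ℚ) : q ^ 2 ≠ 2 := by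
  intro h
  have hq : ((q : ℝ)) ^ 2 = 2 := by exact_mod_cast congrArg (fun t : ℚ => (t : ℝ)) h
  have h2 : Real.sqrt 2 = |(q : ℝ)| := by
    rw [← hq, Real.sqrt_sq_eq_abs]
  exact irrational_sqrt_two ⟨|q|, by rw [Rat.cast_abs]; exact h2.symm⟩

theorem stmt_19 (n : ℕ) (hn : 0 < n)
    (hcong : ∃ a b c : ℚ, a ≠ 0 ∧ b ≠ 0 ∧ c ≠ 0 ∧
      a ^ 2 + b ^ 2 = c ^ 2 ∧ a * b / 2 = n) :
    ¬ IsSquare n := by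
  rintro ⟨m, hm⟩
  obtain ⟨a, b, c, ha, hb, hc, hpyth, harea⟩ := hcong
  have hm0 : m ≠ 0 := by rintro rfl; omega
  have hM0 : (m : ℚ) ≠ 0 := by exact_mod_cast hm0
  set A : ℚ := a / m with hA
  set B : ℚ := b / m with hB
  set C : ℚ := c / m with hC
  have hA0 : A ≠ 0 := div_ne_zero ha hM0
  have hB0 : B ≠ 0 := div_ne_zero hb hM0
  have hC0 : C ≠ 0 := div_ne_zero hc hM0
  have hP : A ^ 2 + B ^ 2 = C ^ 2 := by
    rw [hA, hB, hC]
    field_simp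
    linear_combination hpyth
  have hAB : A * B = 2 := by
    have hnm : (n : ℚ) = (m : ℚ) * m := by exact_mod_cast congrArg (fun t : ℕ => (t : ℚ)) hm
    rw [hA, hB]
    field_simp
    linear_combination 2 * harea + 2 * hnm
  set t : ℚ := A ^ 2 - B ^ 2 with htdef
  have ht2 : t ^ 2 = C ^ 4 - 16 := by
    rw [htdef]
    linear_combination (A ^ 2 + B ^ 2 + C ^ 2) * hP - 4 * (A * B + 2) * hAB
  have ht0 : t ≠ 0 := by
    intro h
    have hAB2 : A ^ 2 = B ^ 2 := by
      have := sub_eq_zero.mp (htdef ▸ h)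
      linarith
    have h4 : (A ^ 2) ^ 2 = 4 := by
      have hsq : (A * B) ^ 2 = 4 := by rw [hAB]; norm_num
      have : A ^ 2 * B ^ 2 = 4 := by linear_combination hsq
      rw [← hAB2] at this
      linear_combination this
    have hA2 : A ^ 2 = 2 := by
      have hnn : 0 ≤ A ^ 2 := sq_nonneg A
      have h5 : (A ^ 2 - 2) * (A ^ 2 + 2) = 0 := by linear_combination h4
      rcases mul_eq_zero.mp h5 with h6 | h6
      · linarith
      · linarith
    exact no_rat_sq_two A hA2
  -- clear denominators
  set p : ℤ := C.num with hp
  set d : ℤ := (C.den : ℤ) with hd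
  have hd0 : d ≠ 0 := by
    rw [hd]; exact_mod_cast C.den_nz
  have hp0 : p ≠ 0 := Rat.num_ne_zero.mpr hC0
  have hCd : (C : ℚ) * (d : ℚ) = (p : ℚ) := by
    rw [hp, hd]
    push_cast
    rw [mul_comm]
    exact_mod_cast Rat.den_mul_eq_num C
  set T : ℚ := t * (d : ℚ) ^ 2 with hTdef
  have hT2 : T ^ 2 = ((p ^ 4 - 16 * d ^ 4 : ℤ) : ℚ) := by
    push_cast
    have hC4 : C ^ 4 * (d : ℚ) ^ 4 = (p : ℚ) ^ 4 := by
      rw [show C ^ 4 * (d:ℚ) ^ 4 = (C * d) ^ 4 by ring, hCd]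
    rw [hTdef]
    linear_combination (d : ℚ) ^ 4 * ht2 + hC4
  have hTden : T.den = 1 := by
    have h1 : (T * T).den = 1 := by
      rw [show T * T = ((p ^ 4 - 16 * d ^ 4 : ℤ) : ℚ) by rw [← hT2]; ring]
      exact Rat.den_intCast _
    rw [Rat.mul_self_den] at h1
    exact Nat.eq_one_of_mul_eq_one_left h1
  have hTnum : ((T.num : ℤ) : ℚ) = T := (Rat.den_eq_one_iff T).mp hTden
  set r : ℤ := T.num with hr
  have hr0 : r ≠ 0 := by
    rw [hr]
    exact Rat.num_ne_zero.mpr (mul_ne_zero ht0 (pow_ne_zero 2 (by exact_mod_cast hd0)))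
  have hrZ : r ^ 2 = p ^ 4 - 16 * d ^ 4 := by
    have h : ((r ^ 2 : ℤ) : ℚ) = ((p ^ 4 - 16 * d ^ 4 : ℤ) : ℚ) := by
      rw [← hT2]
      push_cast
      rw [hr, hTnum]
    exact_mod_cast h
  have h2d0 : (2 * d : ℤ) ≠ 0 := by simp [hd0]
  exact no_f44 p (2 * d) r hp0 h2d0 hr0 (by linear_combination -hrZ)
end
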